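/- Let T ⊆ V with w(T) > W_U. Then for every feasible partition π of V, E_π(T) ≤ (|T|−1)(|T|−2)/2. -/

import Mathlib

lemma choose2_succ (m : ℕ) : (m + 1).choose 2 = m.choose 2 + m := by
  rw [Nat.choose_succ_succ]
  simp [Nat.add_comm]

lemma choose2_add (x y : ℕ) : (x + y).choose 2 = x.choose 2 + y.choose 2 + x * y := by
  induction y with
  | zero => simp
  | succ n ih =>
    rw [← Nat.add_assoc, choose2_succ, ih, choose2_succ]
    ring

lemma sum_choose2_le {ι : Type*} (s : Finset ι) (f : ι → ℕ) :
    (∑ i ∈ s, (f i).choose 2) ≤ (∑ i ∈ s, f i).choose 2 := by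
  induction s using Finset.cons_induction with
  | empty => simp
  | cons a s ha ih =>
    rw [Finset.sum_cons, Finset.sum_cons, choose2_add]
    omega

lemma choose2_key (a b : ℕ) (ha : 1 ≤ a) (hb : 1 ≤ b) :
    a.choose 2 + b.choose 2 ≤ (a + b - 1).choose 2 := by
  obtain ⟨c, rfl⟩ : ∃ c, b = c + 1 := ⟨b - 1, by omega⟩
  have h1 : a + (c + 1) - 1 = a + c := by omega
  have e1 : (a + (c + 1) - 1).choose 2 = a.choose 2 + c.choose 2 + a * c := by
    rw [h1, choose2_add]
  have e2 : (c + 1).choose 2 = c.choose 2 + c := choose2_succ c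
  have e3 : c ≤ a * c := Nat.le_mul_of_pos_left c ha
  omega

/-- A feasible partition of the node set `V` into `k` parts: every part is nonempty,
parts are pairwise disjoint, their union is `V`, the sizes of any two parts differ by
at most one, and the weight of every part lies between `WL` and `WU`. -/
def IsFeasiblePartition {α : Type*} [DecidableEq α] (V : Finset α) (w : α → ℝ)
    (k : ℕ) (WL WU : ℝ) (P : Fin k → Finset α) : Prop :=
  (∀ c, (P c).Nonempty) ∧
  (∀ c c', c ≠ c' → Disjoint (P c) (P c')) ∧
  Finset.univ.biUnion P = V ∧
  (∀ c c', (P c).card ≤ (P c').card + 1) ∧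
  (∀ c, WL ≤ ∑ v ∈ P c, w v ∧ ∑ v ∈ P c, w v ≤ WU)

/-- if `T ⊆ V` has `w(T) > W_U`, then for every feasible partition `π`,
`E_π(T) ≤ (|T|-1)(|T|-2)/2`, where `E_π(T)` counts the unordered pairs of distinct
elements of `T` lying in a common part. -/
theorem stmt_1 {α : Type*} [DecidableEq α] (V : Finset α) (w : α → ℝ)
    (k : ℕ) (WL WU : ℝ)
    (hw : ∀ v ∈ V, 0 < w v) (hk : 2 ≤ k) (hWLU : 0 ≤ WL) (hWL : WL ≤ WU)
    (T : Finset α) (hT : T ⊆ V) (hwT : WU < ∑ v ∈ T, w v)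
    (P : Fin k → Finset α)
    (hfeas : IsFeasiblePartition V w k WL WU P) :
    ∑ c : Fin k, ((P c ∩ T).card.choose 2) ≤ (T.card - 1) * (T.card - 2) / 2 := by
  obtain ⟨hne, hdisj, hcover, hbal, hwb⟩ := hfeas
  have hPV : ∀ c, P c ⊆ V := fun c => hcover ▸ Finset.subset_biUnion_of_mem P (Finset.mem_univ c)
  -- sum of intersection cards equals |T|
  have hsum : ∑ c : Fin k, (P c ∩ T).card = T.card := by
    rw [← Finset.card_biUnion (fun c _ c' _ hcc' =>
      Finset.disjoint_of_subset_left Finset.inter_subset_left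
        (Finset.disjoint_of_subset_right Finset.inter_subset_left (hdisj c c' hcc')))]
    congr 1
    ext v
    simp only [Finset.mem_biUnion, Finset.mem_univ, true_and, Finset.mem_inter]
    constructor
    · rintro ⟨c, _, hv⟩; exact hv
    · intro hv
      have hvV : v ∈ V := hT hv
      rw [← hcover] at hvV
      simp only [Finset.mem_biUnion, Finset.mem_univ, true_and] at hvV
      obtain ⟨c, hc⟩ := hvV
      exact ⟨c, hc, hv⟩
  -- each intersection is a strict subset of T
  have hlt : ∀ c, (P c ∩ T).card < T.card := by
    intro c
    rcases lt_or_ge (P c ∩ T).card T.card with h | h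
    · exact h
    · exfalso
      have heq : P c ∩ T = T := Finset.eq_of_subset_of_card_le Finset.inter_subset_right h
      have hTP : T ⊆ P c := by
        intro v hv
        have := heq ▸ hv
        exact (Finset.mem_inter.mp this).1
      have : ∑ v ∈ T, w v ≤ ∑ v ∈ P c, w v := by
        apply Finset.sum_le_sum_of_subset_of_nonneg hTP
        intro v hv _
        exact (hw v (hPV c hv)).le
      linarith [(hwb c).2]
  -- T is nonempty
  have hTne : T.Nonempty := by
    rcases T.eq_empty_or_nonempty with rfl | h
    · simp at hwT; linarith
    · exact h
  obtain ⟨v, hv⟩ := hTne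
  have hvV : v ∈ V := hT hv
  rw [← hcover] at hvV
  simp only [Finset.mem_biUnion, Finset.mem_univ, true_and] at hvV
  obtain ⟨c0, hc0⟩ := hvV
  have hn0 : 1 ≤ (P c0 ∩ T).card :=
    Finset.card_pos.mpr ⟨v, Finset.mem_inter.mpr ⟨hc0, hv⟩⟩
  -- split off c0
  have hsplit : ∑ c : Fin k, ((P c ∩ T).card.choose 2)
      = (P c0 ∩ T).card.choose 2 + ∑ c ∈ Finset.univ.erase c0, ((P c ∩ T).card.choose 2) :=
    (Finset.add_sum_erase _ _ (Finset.mem_univ c0)).symm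
  have hrest_sum : ∑ c ∈ Finset.univ.erase c0, (P c ∩ T).card = T.card - (P c0 ∩ T).card := by
    have h := Finset.add_sum_erase Finset.univ (fun c => (P c ∩ T).card) (Finset.mem_univ c0)
    rw [hsum] at h
    omega
  have hrest : ∑ c ∈ Finset.univ.erase c0, ((P c ∩ T).card.choose 2)
      ≤ (T.card - (P c0 ∩ T).card).choose 2 := by
    rw [← hrest_sum]
    exact sum_choose2_le _ _
  have hkey : (P c0 ∩ T).card.choose 2 + (T.card - (P c0 ∩ T).card).choose 2
      ≤ (T.card - 1).choose 2 := by
    have h1 : 1 ≤ T.card - (P c0 ∩ T).card := by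
      have := hlt c0; omega
    have h2 : (P c0 ∩ T).card + (T.card - (P c0 ∩ T).card) - 1 = T.card - 1 := by
      have := hlt c0; omega
    calc (P c0 ∩ T).card.choose 2 + (T.card - (P c0 ∩ T).card).choose 2
        ≤ ((P c0 ∩ T).card + (T.card - (P c0 ∩ T).card) - 1).choose 2 :=
          choose2_key _ _ hn0 h1
      _ = (T.card - 1).choose 2 := by rw [h2]
  have hfin : (T.card - 1).choose 2 = (T.card - 1) * (T.card - 2) / 2 := by
    rw [Nat.choose_two_right, Nat.sub_sub]
  rw [← hfin, hsplit]
  omega
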